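/- Let m ≥ 4 and let p_{l,j} ∈ ℂ be given for integers 4 ≤ l and 0 ≤ j with l + j ≤ m. Define P(ζ) := Σ p_{l,j} ζ^l (conj ζ)^j for ζ ∈ ℂ, and the polynomial q(ζ) := Σ p_{l,j} ζ^{m+l−j}. Assume P(ζ) ≠ 0 for every ζ with |ζ| = 1. Then the winding number about 0 of the loop t ↦ P(e^{it}), t ∈ [0,2π], equals n − m, where n is the number of zeros of q in the open unit disk {|ζ| < 1} counted with multiplicity. -/

import Mathlib

noncomputable section

open Complex Polynomial

/-- The winding number about `0` of the loop `γ : [0, 2π] → ℂ ∖ {0}`: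
`W(γ) = (1/(2πi)) ∫₀^{2π} γ'(t)/γ(t) dt`. -/
def winding (γ : ℝ → ℂ) : ℂ :=
  (1 / (2 * (Real.pi : ℂ) * Complex.I)) * ∫ t in (0 : ℝ)..(2 * Real.pi), deriv γ t / γ t

private lemma aux_prod (s : Multiset ℂ) (z : ℂ) (hz : ∀ r ∈ s, z ≠ r) :
    eval z (derivative (s.map fun r => X - C r).prod) / eval z (s.map fun r => X - C r).prod
      = (s.map fun r => (z - r)⁻¹).sum := by
  induction s using Multiset.induction_on with
  | empty => simp
  | cons a t ih =>
    have hne : ∀ r ∈ t, z ≠ r := fun r hr => hz r (Multiset.mem_cons_of_mem hr)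
    have hPt : eval z (t.map fun r => X - C r).prod ≠ 0 := by
      rw [eval_multiset_prod]
      refine Multiset.prod_ne_zero ?_
      simp only [Multiset.map_map, Function.comp, Multiset.mem_map]
      rintro ⟨r, hr, h0⟩
      exact sub_ne_zero.2 (hne r hr) (by simpa using h0)
    have hza : z - a ≠ 0 := sub_ne_zero.2 (hz a (Multiset.mem_cons_self a t))
    rw [Multiset.map_cons, Multiset.prod_cons, Multiset.map_cons, Multiset.sum_cons,
      derivative_mul, ← ih hne]
    simp only [eval_add, eval_mul, derivative_sub, derivative_X, derivative_C, sub_zero,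
      eval_one, eval_sub, eval_X, eval_C, one_mul]
    field_simp

private lemma logderiv_poly (q : ℂ[X]) (z : ℂ) (hz : q.eval z ≠ 0) :
    eval z (derivative q) / eval z q = (q.roots.map fun r => (z - r)⁻¹).sum := by
  have hsp : Multiset.card q.roots = q.natDegree :=
    (splits_iff_card_roots).mp (IsAlgClosed.splits q)
  have hrep := C_leadingCoeff_mul_prod_multiset_X_sub_C hsp
  have hz' : ∀ r ∈ q.roots, z ≠ r := by
    intro r hr hzr
    exact hz (by rw [hzr]; exact (Polynomial.mem_roots (fun h => hz (by simp [h])) |>.mp hr))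
  calc eval z (derivative q) / eval z q
      = eval z (derivative (C q.leadingCoeff * (q.roots.map fun r => X - C r).prod))
        / eval z (C q.leadingCoeff * (q.roots.map fun r => X - C r).prod) := by rw [hrep]
    _ = (q.roots.map fun r => (z - r)⁻¹).sum := by
        rw [derivative_C_mul, eval_mul, eval_mul, eval_C, mul_div_mul_left]
        · exact aux_prod _ _ hz'
        · intro h; rw [← hrep] at hz; simp [h] at hz

private lemma circInt_one (a : ℂ) (ha : ‖a‖ ≠ 1) :
    CircleIntegrable (fun z => (z - a)⁻¹) 0 1 := by
  rw [circleIntegrable_sub_inv_iff]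
  right
  simp only [Metric.mem_sphere, Complex.dist_eq, sub_zero, abs_one]
  exact ha

private lemma circInt_sum (s : Multiset ℂ) (hs : ∀ r ∈ s, ‖r‖ ≠ 1) :
    CircleIntegrable (fun z => (s.map fun r => (z - r)⁻¹).sum) 0 1 := by
  induction s using Multiset.induction_on with
  | empty => simp
  | cons a t ih =>
    simp only [Multiset.map_cons, Multiset.sum_cons]
    exact (circInt_one a (hs a (Multiset.mem_cons_self a t))).add
      (ih fun r hr => hs r (Multiset.mem_cons_of_mem hr))

private lemma circ_sub_inv_out (a : ℂ) (ha : 1 < ‖a‖) :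
    (∮ z in C(0, 1), (z - a)⁻¹) = 0 := by
  refine Complex.circleIntegral_eq_zero_of_differentiable_on_off_countable zero_le_one
    Set.countable_empty ?_ ?_
  · intro z hz
    refine (ContinuousAt.continuousWithinAt ?_)
    refine ContinuousAt.inv₀ (by fun_prop) ?_
    intro h
    have hz' : ‖z‖ ≤ 1 := by
      simpa [Metric.mem_closedBall, Complex.dist_eq, sub_zero] using hz
    rw [sub_eq_zero] at h
    rw [h] at hz'
    linarith
  · intro z hz
    refine DifferentiableAt.inv (by fun_prop) ?_
    intro h
    have hz' : ‖z‖ < 1 := by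
      simpa [Metric.mem_ball, Complex.dist_eq, sub_zero] using hz.1
    rw [sub_eq_zero] at h; rw [h] at hz'; linarith

private lemma circ_sum (s : Multiset ℂ) (hs : ∀ r ∈ s, ‖r‖ ≠ 1) :
    (∮ z in C(0, 1), (s.map fun r => (z - r)⁻¹).sum)
      = 2 * (Real.pi : ℂ) * I * (Multiset.card (s.filter fun z => ‖z‖ < 1)) := by
  induction s using Multiset.induction_on with
  | empty => simp [circleIntegral]
  | cons a t ih =>
    have ha := hs a (Multiset.mem_cons_self a t)
    have ht : ∀ r ∈ t, ‖r‖ ≠ 1 := fun r hr => hs r (Multiset.mem_cons_of_mem hr)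
    have h1 : (∮ z in C(0, 1), ((z - a)⁻¹ + (t.map fun r => (z - r)⁻¹).sum))
        = (∮ z in C(0, 1), (z - a)⁻¹) + ∮ z in C(0, 1), (t.map fun r => (z - r)⁻¹).sum :=
      by simp only [circleIntegral, smul_add,
           intervalIntegral.integral_add ((circInt_one a ha).out) ((circInt_sum t ht).out)]
    simp only [Multiset.map_cons, Multiset.sum_cons]
    rw [h1, ih ht]
    by_cases hlt : ‖a‖ < 1
    · rw [circleIntegral.integral_sub_inv_of_mem_ball
        (by simpa [Metric.mem_ball, Complex.dist_eq, sub_zero] using hlt)]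
      rw [Multiset.filter_cons_of_pos (p := fun z => ‖z‖ < 1) _ hlt]
      push_cast [Multiset.card_cons]
      ring
    · rw [circ_sub_inv_out a (lt_of_le_of_ne (not_lt.mp hlt) (Ne.symm ha))]
      rw [Multiset.filter_cons_of_neg (p := fun z => ‖z‖ < 1) _ hlt]
      ring

/-- **Lemma 6.8 (argument principle computation)**: let `P(ζ) = Σ p_{l,j} ζ^l ζ̄^j` (sum over
`4 ≤ l`, `0 ≤ j`, `l + j ≤ m`) be nonvanishing on the unit circle and let
`q(ζ) = Σ p_{l,j} ζ^{m+l-j}`. Then the winding number about `0` of `t ↦ P(e^{it})` equals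
`n - m`, where `n` is the number of zeros of `q` in the open unit disk counted with
multiplicity. -/
theorem winding_eq_zeros_sub_degree (m : ℕ) (hm : 4 ≤ m) (p : ℕ → ℕ → ℂ)
    (P : ℂ → ℂ)
    (hP : ∀ ζ : ℂ, P ζ = ∑ l ∈ Finset.Icc 4 m, ∑ j ∈ Finset.range (m - l + 1),
      p l j * ζ ^ l * (starRingEnd ℂ ζ) ^ j)
    (q : Polynomial ℂ)
    (hq : q = ∑ l ∈ Finset.Icc 4 m, ∑ j ∈ Finset.range (m - l + 1),
      Polynomial.C (p l j) * Polynomial.X ^ (m + l - j))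
    (hnv : ∀ ζ : ℂ, ‖ζ‖ = 1 → P ζ ≠ 0) :
    winding (fun t : ℝ => P (Complex.exp (Complex.I * (t : ℂ)))) =
      ((Multiset.card (q.roots.filter (fun z => ‖z‖ < 1)) : ℂ) - (m : ℂ)) := by
  have hπ : (Real.pi : ℂ) ≠ 0 := by exact_mod_cast Real.pi_ne_zero
  have habs : ∀ t : ℝ, ‖Complex.exp (I * (t : ℂ))‖ = 1 := by
    intro t; simp [Complex.norm_exp]
  have hconj : ∀ ζ : ℂ, ‖ζ‖ = 1 → (starRingEnd ℂ) ζ = ζ⁻¹ := by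
    intro ζ h
    refine eq_inv_of_mul_eq_one_left ?_
    rw [mul_comm, Complex.mul_conj]
    norm_cast
    simp [Complex.normSq_eq_norm_sq, h]
  have hqP : ∀ ζ : ℂ, ‖ζ‖ = 1 → q.eval ζ = ζ ^ m * P ζ := by
    intro ζ h
    have hζ : ζ ≠ 0 := by intro h0; simp [h0] at h
    rw [hq, hP ζ, hconj ζ h, Polynomial.eval_finset_sum, Finset.mul_sum]
    refine Finset.sum_congr rfl fun l hl => ?_
    rw [Polynomial.eval_finset_sum, Finset.mul_sum]
    refine Finset.sum_congr rfl fun j hj => ?_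
    simp only [Polynomial.eval_mul, Polynomial.eval_pow, Polynomial.eval_C, Polynomial.eval_X]
    have hjl : j ≤ m + l := by
      have := Finset.mem_range.mp hj; omega
    rw [pow_sub₀ ζ hζ hjl, pow_add, inv_pow]
    ring
  have hq0 : q ≠ 0 := by
    intro h0
    have h1 := hqP 1 (by simp)
    rw [h0] at h1
    simp only [Polynomial.eval_zero, one_pow, one_mul] at h1
    exact hnv 1 (by simp) h1.symm
  have hqne : ∀ ζ : ℂ, ‖ζ‖ = 1 → q.eval ζ ≠ 0 := by
    intro ζ h
    rw [hqP ζ h]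
    exact mul_ne_zero (pow_ne_zero _ (by intro h0; simp [h0] at h)) (hnv ζ h)
  have hroots : ∀ r ∈ q.roots, ‖r‖ ≠ 1 := by
    intro r hr h1
    exact hqne r h1 ((Polynomial.mem_roots hq0).mp hr)
  set G : ℂ → ℂ := fun z => Complex.exp (-(m : ℂ) * (I * z)) * q.eval (Complex.exp (I * z))
    with hG
  have hγ : (fun t : ℝ => P (Complex.exp (I * (t : ℂ)))) = fun t : ℝ => G (t : ℂ) := by
    funext t
    have h1 := hqP _ (habs t)
    have h2 : Complex.exp (-(m : ℂ) * (I * (t : ℂ))) = (Complex.exp (I * (t : ℂ)) ^ m)⁻¹ := by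
      rw [neg_mul, Complex.exp_neg, Complex.exp_nat_mul]
    simp only [hG]
    rw [h2, h1]
    have h3 : Complex.exp (I * (t : ℂ)) ≠ 0 := Complex.exp_ne_zero _
    field_simp
  have hGd : ∀ z : ℂ, HasDerivAt G
      (Complex.exp (-(m : ℂ) * (I * z)) * (-(m : ℂ) * I) * q.eval (Complex.exp (I * z))
        + Complex.exp (-(m : ℂ) * (I * z))
          * (q.derivative.eval (Complex.exp (I * z)) * (Complex.exp (I * z) * I))) z := by
    intro z
    have h1 : HasDerivAt (fun z : ℂ => Complex.exp (-(m : ℂ) * (I * z)))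
        (Complex.exp (-(m : ℂ) * (I * z)) * (-(m : ℂ) * I)) z := by
      have h0 : HasDerivAt (fun z : ℂ => -(m : ℂ) * (I * z)) (-(m : ℂ) * I) z := by
        simpa [mul_assoc] using (hasDerivAt_id z).const_mul (-(m : ℂ) * I)
      exact h0.cexp
    have h2 : HasDerivAt (fun z : ℂ => Complex.exp (I * z)) (Complex.exp (I * z) * I) z := by
      have h0 : HasDerivAt (fun z : ℂ => I * z) I z := by
        simpa using (hasDerivAt_id z).const_mul I
      exact h0.cexp
    have h3 : HasDerivAt (fun z : ℂ => q.eval (Complex.exp (I * z)))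
        (q.derivative.eval (Complex.exp (I * z)) * (Complex.exp (I * z) * I)) z :=
      (q.hasDerivAt _).comp z h2
    exact h1.mul h3
  have key : ∀ t : ℝ, deriv (fun t : ℝ => G (t : ℂ)) t / G (t : ℂ)
      = -(m : ℂ) * I + (Complex.exp (I * (t : ℂ)) * I)
          * (q.derivative.eval (Complex.exp (I * (t : ℂ))) / q.eval (Complex.exp (I * (t : ℂ)))) := by
    intro t
    rw [((hGd (t : ℂ)).comp_ofReal).deriv]
    have hA : Complex.exp (-(m : ℂ) * (I * (t : ℂ))) ≠ 0 := Complex.exp_ne_zero _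
    have hB : q.eval (Complex.exp (I * (t : ℂ))) ≠ 0 := hqne _ (habs t)
    simp only [hG]
    field_simp
  have hcont : Continuous fun t : ℝ => (Complex.exp (I * (t : ℂ)) * I)
      * (q.derivative.eval (Complex.exp (I * (t : ℂ))) / q.eval (Complex.exp (I * (t : ℂ)))) := by
    have he : Continuous fun t : ℝ => Complex.exp (I * (t : ℂ)) :=
      Complex.continuous_exp.comp (continuous_const.mul Complex.continuous_ofReal)
    exact (he.mul continuous_const).mul
      ((q.derivative.continuous_aeval.comp he).div (q.continuous_aeval.comp he)
        fun t => hqne _ (habs t))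
  have key2 : ∀ t : ℝ, deriv (fun s : ℝ => P (Complex.exp (I * (s : ℂ)))) t
      / P (Complex.exp (I * (t : ℂ)))
      = -(m : ℂ) * I + (Complex.exp (I * (t : ℂ)) * I)
          * (q.derivative.eval (Complex.exp (I * (t : ℂ))) / q.eval (Complex.exp (I * (t : ℂ)))) := by
    intro t
    rw [hγ, congrFun hγ t]
    exact key t
  unfold winding
  rw [intervalIntegral.integral_congr (g := fun t : ℝ => -(m : ℂ) * I
      + (Complex.exp (I * (t : ℂ)) * I)
        * (q.derivative.eval (Complex.exp (I * (t : ℂ))) / q.eval (Complex.exp (I * (t : ℂ)))))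
    (fun t _ => key2 t)]
  rw [intervalIntegral.integral_add intervalIntegrable_const
    (hcont.intervalIntegrable _ _)]
  have hcirc : (∫ t in (0 : ℝ)..(2 * Real.pi), (Complex.exp (I * (t : ℂ)) * I)
        * (q.derivative.eval (Complex.exp (I * (t : ℂ))) / q.eval (Complex.exp (I * (t : ℂ)))))
      = ∮ z in C(0, 1), q.derivative.eval z / q.eval z := by
    rw [circleIntegral]
    refine intervalIntegral.integral_congr fun θ _ => ?_
    have hmap : circleMap 0 1 θ = Complex.exp (I * (θ : ℂ)) := by
      simp [circleMap, mul_comm]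
    rw [deriv_circleMap, hmap]
    simp only [smul_eq_mul]
  rw [hcirc]
  have hci : (∮ z in C(0, 1), q.derivative.eval z / q.eval z)
      = 2 * (Real.pi : ℂ) * I
        * (Multiset.card (q.roots.filter fun z => ‖z‖ < 1)) := by
    rw [circleIntegral.integral_congr zero_le_one (g := fun z => (q.roots.map fun r => (z - r)⁻¹).sum)
      (fun z hz => logderiv_poly q z (hqne z (by simpa [Complex.dist_eq] using hz)))]
    exact circ_sum q.roots hroots
  rw [hci]
  rw [intervalIntegral.integral_const, sub_zero, real_smul]
  push_cast
  field_simp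
  ring
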